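/- Let (X,r) be a finite colored space with |X| = n ≥ 5, a_2(r) < n(n−1)/2, and m_2(r) = 0 (i.e., every color class is a matching). Then there exists a fusion r_1 of r such that 1 ≤ a_2(r) − a_2(r_1) ≤ 2 and a_2(r) − a_2(r_1) ≤ a_3(r) − a_3(r_1). -/

import Mathlib

set_option linter.unusedSectionVars false
set_option linter.unusedVariables false

/-- The set of colors of the colored space `(X, r)`: values `r x y` for distinct `x, y`. -/
def colorIm {X C : Type*} (r : X → X → C) : Set C :=
  {α | ∃ x y : X, x ≠ y ∧ r x y = α}

/-- `a₂(r)`: the number of colors. -/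
noncomputable def a2 {X C : Type*} (r : X → X → C) : ℕ := (colorIm r).ncard

/-- `A₃(r)`: the set of multisets of colors of triangles on 3-subsets of `X`. -/
def A3 {X C : Type*} (r : X → X → C) : Set (Multiset C) :=
  {m | ∃ x y z : X, x ≠ y ∧ y ≠ z ∧ x ≠ z ∧ m = {r x y, r y z, r x z}}

/-- `a₃(r)`: the number of isometry classes of 3-subsets. -/
noncomputable def a3 {X C : Type*} (r : X → X → C) : ℕ := (A3 r).ncard

/-- `M_k(r)`: colors `α` such that the graph `(X, E_α)` has a vertex of degree at least `k`. -/
def Mdeg {X C : Type*} (r : X → X → C) (k : ℕ) : Set C :=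
  {α | ∃ x : X, k ≤ {y | y ≠ x ∧ r x y = α}.ncard}

/-- A nonempty set `Γ` of colors is closed if `α, β ∈ Γ` and `αβγ ∈ A₃(r)` imply `γ ∈ Γ`. -/
def IsClosedColors {X C : Type*} (r : X → X → C) (Γ : Set C) : Prop :=
  ∀ α β γ : C, α ∈ Γ → β ∈ Γ → ({α, β, γ} : Multiset C) ∈ A3 r → γ ∈ Γ

/-- The union of the color classes `E_α`, `α ∈ S`, is a matching (max degree ≤ 1). -/
def IsMatchingOn {X C : Type*} (r : X → X → C) (S : Set C) : Prop :=
  ∀ x y z : X, y ≠ x → z ≠ x → r x y ∈ S → r x z ∈ S → y = z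

/-- `r₁` is a fusion of `r`: the color partition of `r` refines that of `r₁`. -/
def IsFusion {X C D : Type*} (r : X → X → C) (r₁ : X → X → D) : Prop :=
  ∀ x y u v : X, x ≠ y → u ≠ v → r x y = r u v → r₁ x y = r₁ u v

/-- The connected component of `x₀` in the graph on `X` whose edges are the pairs
colored by an element of `S`. -/
def compOf {X C : Type*} (r : X → X → C) (S : Set C) (x₀ : X) : Set X :=
  {y | Relation.ReflTransGen (fun a b => a ≠ b ∧ r a b ∈ S) x₀ y}

/-- `A₃` of the subspace induced on `W ⊆ X`. -/
def A3on {X C : Type*} (r : X → X → C) (W : Set X) : Set (Multiset C) :=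
  {m | ∃ x ∈ W, ∃ y ∈ W, ∃ z ∈ W, x ≠ y ∧ y ≠ z ∧ x ≠ z ∧ m = {r x y, r y z, r x z}}

section aux
variable {X C : Type*} [Fintype X] (r : X → X → C)

private lemma colorIm_finite : (colorIm r).Finite := by
  apply Set.Finite.subset (Set.finite_range (fun p : X × X => r p.1 p.2))
  rintro α ⟨x, y, -, h⟩; exact ⟨(x, y), h⟩

private lemma A3_finite : (A3 r).Finite := by
  apply Set.Finite.subset (Set.finite_range
    (fun p : X × X × X => ({r p.1 p.2.1, r p.2.1 p.2.2, r p.1 p.2.2} : Multiset C)))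
  rintro m ⟨x, y, z, -, -, -, h⟩; exact ⟨(x, y, z), h.symm⟩

private lemma colorIm_comp (f : C → C) : colorIm (fun a b => f (r a b)) = f '' colorIm r := by
  ext α
  constructor
  · rintro ⟨x, y, hxy, h⟩; exact ⟨r x y, ⟨x, y, hxy, rfl⟩, h⟩
  · rintro ⟨β, ⟨x, y, hxy, hβ⟩, h⟩; exact ⟨x, y, hxy, by show f (r x y) = α; rw [hβ, h]⟩

private lemma A3_comp (f : C → C) :
    A3 (fun a b => f (r a b)) = (Multiset.map f) '' A3 r := by
  ext m
  constructor
  · rintro ⟨x, y, z, h1, h2, h3, h⟩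
    exact ⟨{r x y, r y z, r x z}, ⟨x, y, z, h1, h2, h3, rfl⟩, by simp [h]⟩
  · rintro ⟨m', ⟨x, y, z, h1, h2, h3, h⟩, hm⟩
    exact ⟨x, y, z, h1, h2, h3, by simp [← hm, h]⟩

end aux

section ms
variable {C : Type*}

private lemma ms213 (a b c : C) : ({a, b, c} : Multiset C) = {b, a, c} := by
  show a ::ₘ b ::ₘ {c} = b ::ₘ a ::ₘ {c}
  exact Multiset.cons_swap a b {c}

private lemma ms132 (a b c : C) : ({a, b, c} : Multiset C) = {a, c, b} := by
  show a ::ₘ b ::ₘ c ::ₘ 0 = a ::ₘ c ::ₘ b ::ₘ 0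
  rw [Multiset.cons_swap b c]

private lemma ms321 (a b c : C) : ({a, b, c} : Multiset C) = {c, b, a} := by
  rw [ms213, ms132, ms213]

private lemma ms312 (a b c : C) : ({a, b, c} : Multiset C) = {c, a, b} := by
  rw [ms132, ms213]

private lemma ms_ne {a : C} {s t : Multiset C} (ha : a ∈ s) (hna : a ∉ t) : s ≠ t :=
  fun h => hna (h ▸ ha)

private lemma mem_triple_iff (a x y z : C) :
    a ∈ ({x, y, z} : Multiset C) ↔ a = x ∨ a = y ∨ a = z := by
  simp [Multiset.insert_eq_cons]

end ms

section cnt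
variable {A B : Type*}

private lemma image_merge1 [DecidableEq B] {S : Set B} {a b : B} (ha : a ∈ S) (hb : b ∈ S)
    (hab : a ≠ b) :
    (fun c => if c = b then a else c) '' S = S \ {b} := by
  ext c
  constructor
  · rintro ⟨d, hd, rfl⟩
    by_cases h : d = b <;> simp [h, ha, hab, hd]
  · rintro ⟨hc, hcb⟩
    exact ⟨c, hc, by simp at hcb; simp [hcb]⟩

private lemma image_merge2 [DecidableEq B] {S : Set B} {a b a' b' : B} (ha : a ∈ S) (hb : b ∈ S)
    (ha' : a' ∈ S) (hb' : b' ∈ S) (hab : a ≠ b) (hab' : a ≠ b') (ha'b : a' ≠ b)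
    (ha'b' : a' ≠ b') (hbb' : b ≠ b') :
    (fun c => if c = b then a else if c = b' then a' else c) '' S = S \ {b, b'} := by
  ext c
  constructor
  · rintro ⟨d, hd, rfl⟩
    by_cases h : d = b
    · simp [h, ha, hab, hab']
    · by_cases h' : d = b'
      · simp [h, h', ha', ha'b, ha'b', hbb'.symm]
      · simp [h, h', hd]
  · rintro ⟨hc, hcb⟩
    simp at hcb
    exact ⟨c, hc, by simp [hcb.1, hcb.2]⟩

private lemma ncard_image_drop1 {T : Set A} (hT : T.Finite) (g : A → B) {t1 t2 : A}
    (h1 : t1 ∈ T) (h2 : t2 ∈ T) (hne : t1 ≠ t2) (he : g t1 = g t2) :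
    (g '' T).ncard + 1 ≤ T.ncard := by
  have himg : g '' T = g '' (T \ {t2}) := by
    apply Set.Subset.antisymm
    · rintro c ⟨d, hd, rfl⟩
      by_cases h : d = t2
      · exact ⟨t1, ⟨h1, by simp [hne]⟩, by rw [he, h]⟩
      · exact ⟨d, ⟨hd, by simp [h]⟩, rfl⟩
    · exact Set.image_mono Set.diff_subset
  have h3 : (T \ {t2}).ncard + 1 = T.ncard := Set.ncard_diff_singleton_add_one h2 hT
  have h4 : (g '' T).ncard ≤ (T \ {t2}).ncard := by
    rw [himg]; exact Set.ncard_image_le (hT.subset Set.diff_subset)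
  omega

private lemma ncard_image_drop2 {T : Set A} (hT : T.Finite) (g : A → B) {t1 t2 t3 t4 : A}
    (h1 : t1 ∈ T) (h2 : t2 ∈ T) (h3 : t3 ∈ T) (h4 : t4 ∈ T)
    (h12 : t1 ≠ t2) (h14 : t1 ≠ t4) (h32 : t3 ≠ t2) (h34 : t3 ≠ t4) (h24 : t2 ≠ t4)
    (he : g t1 = g t2) (he' : g t3 = g t4) :
    (g '' T).ncard + 2 ≤ T.ncard := by
  have himg : g '' T = g '' (T \ {t2, t4}) := by
    apply Set.Subset.antisymm
    · rintro c ⟨d, hd, rfl⟩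
      by_cases h : d = t2
      · exact ⟨t1, ⟨h1, by simp [h12, h14]⟩, by rw [he, h]⟩
      by_cases h' : d = t4
      · exact ⟨t3, ⟨h3, by simp [h32, h34]⟩, by rw [he', h']⟩
      · exact ⟨d, ⟨hd, by simp [h, h']⟩, rfl⟩
    · exact Set.image_mono Set.diff_subset
  have hsub : ({t2, t4} : Set A) ⊆ T := by
    rintro c hc; rcases hc with rfl | hc
    · exact h2
    · simp at hc; exact hc ▸ h4
  have hd : (T \ {t2, t4}).ncard = T.ncard - 2 := by
    rw [Set.ncard_diff hsub (hT.subset hsub), Set.ncard_pair h24]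
  have hle : 2 ≤ T.ncard := by
    rw [← Set.ncard_pair h24]
    exact Set.ncard_le_ncard hsub hT
  have h5 : (g '' T).ncard ≤ (T \ {t2, t4}).ncard := by
    rw [himg]; exact Set.ncard_image_le (hT.subset Set.diff_subset)
  omega

end cnt

section fin
variable {X C : Type*} [Fintype X] [DecidableEq C]

private lemma finisher1 (r : X → X → C) (hsym : ∀ x y, r x y = r y x) {a b : C}
    (ha : a ∈ colorIm r) (hb : b ∈ colorIm r) (hab : a ≠ b) {t1 t2 : Multiset C}
    (h1 : t1 ∈ A3 r) (h2 : t2 ∈ A3 r) (hne : t1 ≠ t2)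
    (hmap : t1.map (fun c => if c = b then a else c) = t2.map (fun c => if c = b then a else c)) :
    ∃ r₁ : X → X → C, (∀ x y, r₁ x y = r₁ y x) ∧ IsFusion r r₁ ∧
      a2 r₁ < a2 r ∧ a2 r - a2 r₁ ≤ 2 ∧ a3 r₁ + (a2 r - a2 r₁) ≤ a3 r := by
  set f : C → C := fun c => if c = b then a else c with hf
  refine ⟨fun p q => f (r p q), fun p q => by show f (r p q) = f (r q p); rw [hsym],
    fun p q u v _ _ h => congrArg f h, ?_, ?_, ?_⟩ <;>
  · have ha2 : a2 (fun p q => f (r p q)) + 1 = a2 r := by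
      unfold a2
      rw [colorIm_comp, hf, image_merge1 ha hb hab]
      exact Set.ncard_diff_singleton_add_one hb (colorIm_finite r)
    have ha3 : a3 (fun p q => f (r p q)) + 1 ≤ a3 r := by
      unfold a3
      rw [A3_comp]
      exact ncard_image_drop1 (A3_finite r) _ h1 h2 hne hmap
    omega

private lemma finisher2 (r : X → X → C) (hsym : ∀ x y, r x y = r y x) {a b a' b' : C}
    (ha : a ∈ colorIm r) (hb : b ∈ colorIm r) (ha' : a' ∈ colorIm r) (hb' : b' ∈ colorIm r)
    (hab : a ≠ b) (hab' : a ≠ b') (ha'b : a' ≠ b) (ha'b' : a' ≠ b') (hbb' : b ≠ b')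
    {t1 t2 t3 t4 : Multiset C}
    (h1 : t1 ∈ A3 r) (h2 : t2 ∈ A3 r) (h3 : t3 ∈ A3 r) (h4 : t4 ∈ A3 r)
    (h12 : t1 ≠ t2) (h14 : t1 ≠ t4) (h32 : t3 ≠ t2) (h34 : t3 ≠ t4) (h24 : t2 ≠ t4)
    (hmap : t1.map (fun c => if c = b then a else if c = b' then a' else c)
          = t2.map (fun c => if c = b then a else if c = b' then a' else c))
    (hmap' : t3.map (fun c => if c = b then a else if c = b' then a' else c)
          = t4.map (fun c => if c = b then a else if c = b' then a' else c)) :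
    ∃ r₁ : X → X → C, (∀ x y, r₁ x y = r₁ y x) ∧ IsFusion r r₁ ∧
      a2 r₁ < a2 r ∧ a2 r - a2 r₁ ≤ 2 ∧ a3 r₁ + (a2 r - a2 r₁) ≤ a3 r := by
  set f : C → C := fun c => if c = b then a else if c = b' then a' else c with hf
  have hsub : ({b, b'} : Set C) ⊆ colorIm r := by
    rintro c hc
    rcases hc with rfl | hc
    · exact hb
    · simp only [Set.mem_singleton_iff] at hc; exact hc ▸ hb'
  refine ⟨fun p q => f (r p q), fun p q => by show f (r p q) = f (r q p); rw [hsym],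
    fun p q u v _ _ h => congrArg f h, ?_, ?_, ?_⟩ <;>
  · have ha2 : a2 (fun p q => f (r p q)) = a2 r - 2 := by
      unfold a2
      rw [colorIm_comp, hf, image_merge2 ha hb ha' hb' hab hab' ha'b ha'b' hbb',
        Set.ncard_diff hsub ((colorIm_finite r).subset hsub), Set.ncard_pair hbb']
    have hge : 2 ≤ a2 r := by
      rw [← Set.ncard_pair hbb']
      exact Set.ncard_le_ncard hsub (colorIm_finite r)
    have ha3 : a3 (fun p q => f (r p q)) + 2 ≤ a3 r := by
      unfold a3
      rw [A3_comp]
      exact ncard_image_drop2 (A3_finite r) _ h1 h2 h3 h4 h12 h14 h32 h34 h24 hmap hmap'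
    omega

end fin

section pig
variable {X C : Type*} [Fintype X]

private lemma deg_ne (r : X → X → C) (hm : (Mdeg r 2).ncard = 0) :
    ∀ a b c : X, b ≠ a → c ≠ a → b ≠ c → r a b ≠ r a c := by
  intro a b c hba hca hbc heq
  have hsubIm : Mdeg r 2 ⊆ colorIm r := by
    rintro α ⟨x, hx⟩
    obtain ⟨y, hy⟩ := Set.nonempty_of_ncard_ne_zero
      (by omega : {y | y ≠ x ∧ r x y = α}.ncard ≠ 0)
    exact ⟨x, y, hy.1.symm, hy.2⟩
  have hempty : Mdeg r 2 = ∅ := (Set.ncard_eq_zero ((colorIm_finite r).subset hsubIm)).mp hm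
  have hmem : r a b ∈ Mdeg r 2 := by
    refine ⟨a, ?_⟩
    have hsub2 : ({b, c} : Set X) ⊆ {y | y ≠ a ∧ r a y = r a b} := by
      rintro z hz
      rcases hz with rfl | hz
      · exact ⟨hba, rfl⟩
      · simp only [Set.mem_singleton_iff] at hz
        subst hz
        exact ⟨hca, heq.symm⟩
    calc 2 = ({b, c} : Set X).ncard := (Set.ncard_pair hbc).symm
      _ ≤ _ := Set.ncard_le_ncard hsub2 (Set.toFinite _)
  rw [hempty] at hmem
  exact hmem

private lemma exists_two_pairs (r : X → X → C) (hsym : ∀ x y, r x y = r y x)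
    (ha : a2 r < Fintype.card X * (Fintype.card X - 1) / 2) :
    ∃ x y u v : X, x ≠ y ∧ u ≠ v ∧ r x y = r u v ∧ ¬((x = u ∧ y = v) ∨ (x = v ∧ y = u)) := by
  classical
  by_contra hcon
  push_neg at hcon
  set F : Sym2 X → C := Sym2.lift ⟨r, hsym⟩ with hF
  have him : colorIm r = F '' {a : Sym2 X | ¬a.IsDiag} := by
    ext α
    constructor
    · rintro ⟨x, y, hxy, h⟩
      exact ⟨s(x, y), by simpa [Sym2.isDiag_iff_proj_eq] using hxy, by simpa [hF] using h⟩
    · rintro ⟨a, haD, rfl⟩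
      induction a using Sym2.ind with
      | _ x y =>
        exact ⟨x, y, by simpa [Sym2.isDiag_iff_proj_eq] using haD, by simp [hF]⟩
  have hinj : Set.InjOn F {a : Sym2 X | ¬a.IsDiag} := by
    intro a ha' b hb' hFeq
    induction a using Sym2.ind with
    | _ x y =>
      induction b using Sym2.ind with
      | _ u v =>
        simp only [Set.mem_setOf_eq, Sym2.isDiag_iff_proj_eq] at ha' hb'
        rcases hcon x y u v ha' hb' (by simpa [hF] using hFeq) with ⟨rfl, rfl⟩ | ⟨rfl, rfl⟩
        · rfl
        · exact Sym2.eq_swap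
  have hcard : a2 r = (Fintype.card X).choose 2 := by
    rw [a2, him, Set.ncard_image_of_injOn hinj, ← Nat.card_coe_set_eq]
    have h0 : Nat.card ↥{a : Sym2 X | ¬a.IsDiag} = Nat.card {a : Sym2 X // ¬a.IsDiag} := rfl
    rw [h0, Nat.card_eq_fintype_card, Sym2.card_subtype_not_diag]
  rw [hcard, Nat.choose_two_right] at ha
  omega

end pig

/-- Lemma `lem:a2`. -/
theorem lem_a2 {X C : Type*} [Fintype X] (r : X → X → C)
    (hsym : ∀ x y, r x y = r y x)
    (hX : 5 ≤ Fintype.card X)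
    (ha : a2 r < Fintype.card X * (Fintype.card X - 1) / 2)
    (hm : (Mdeg r 2).ncard = 0) :
    ∃ r₁ : X → X → C, (∀ x y, r₁ x y = r₁ y x) ∧ IsFusion r r₁ ∧
      a2 r₁ < a2 r ∧ a2 r - a2 r₁ ≤ 2 ∧ a3 r₁ + (a2 r - a2 r₁) ≤ a3 r := by
  classical
  have P := deg_ne r hm
  obtain ⟨x, y, u, v, hxy, huv, hcol, hpair⟩ := exists_two_pairs r hsym ha
  have hmem : ∀ p q : X, p ≠ q → r p q ∈ colorIm r := fun p q h => ⟨p, q, h, rfl⟩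
  have hA3m : ∀ p q s : X, p ≠ q → q ≠ s → p ≠ s →
      ({r p q, r q s, r p s} : Multiset C) ∈ A3 r :=
    fun p q s h1 h2 h3 => ⟨p, q, s, h1, h2, h3, rfl⟩
  -- the four points are pairwise distinct
  have hxu : x ≠ u := by
    intro h; subst h
    exact P x y v hxy.symm (Ne.symm huv) (fun h' => hpair (Or.inl ⟨rfl, h'⟩)) hcol
  have hxv : x ≠ v := by
    intro h; subst h
    rw [hsym u x] at hcol
    exact P x y u hxy.symm huv (fun h' => hpair (Or.inr ⟨rfl, h'⟩)) hcol
  have hyu : y ≠ u := by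
    intro h; subst h
    rw [hsym x y] at hcol
    exact P y x v hxy (Ne.symm huv) (fun h' => hpair (Or.inr ⟨h', rfl⟩)) hcol
  have hyv : y ≠ v := by
    intro h; subst h
    rw [hsym x y, hsym u y] at hcol
    exact P y x u hxy huv (fun h' => hpair (Or.inl ⟨h', rfl⟩)) hcol
  -- color distinctness facts
  have hab1 : r x y ≠ r x u := P x y u hxy.symm hxu.symm hyu
  have hab2 : r x y ≠ r x v := P x y v hxy.symm hxv.symm hyv
  have hab3 : r x y ≠ r y u := by rw [hsym x y]; exact P y x u hxy hyu.symm hxu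
  have hab4 : r x y ≠ r y v := by rw [hsym x y]; exact P y x v hxy hyv.symm hxv
  have hb12 : r x u ≠ r x v := P x u v hxu.symm hxv.symm huv
  have hb13 : r x u ≠ r y u := by
    rw [hsym x u, hsym y u]; exact P u x y hxu hyu hxy
  have hb24 : r x v ≠ r y v := by
    rw [hsym x v, hsym y v]; exact P v x y hxv hyv hxy
  have hb34 : r y u ≠ r y v := P y u v hyu.symm hyv.symm huv
  by_cases hb14 : r x u = r y v
  · by_cases hb23 : r x v = r y u
    · -- degenerate case: need a fifth point
      obtain ⟨w, hw⟩ : ∃ w : X, w ∉ ({x, y, u, v} : Finset X) := by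
        by_contra hcon
        push_neg at hcon
        have h1 : (Finset.univ : Finset X) ⊆ {x, y, u, v} := fun z _ => hcon z
        have h2 := Finset.card_le_card h1
        have e1 := Finset.card_insert_le x ({y, u, v} : Finset X)
        have e2 := Finset.card_insert_le y ({u, v} : Finset X)
        have e3 := Finset.card_insert_le u ({v} : Finset X)
        rw [Finset.card_univ] at h2
        simp only [Finset.card_singleton] at e3
        omega
      simp only [Finset.mem_insert, Finset.mem_singleton, not_or] at hw
      obtain ⟨hwx', hwy', hwu', hwv'⟩ := hw
      have hwx : w ≠ x := hwx'
      have hwy : w ≠ y := hwy'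
      have hwu : w ≠ u := hwu'
      have hwv : w ≠ v := hwv'
      -- colors at w are pairwise distinct
      have hc12 : r w x ≠ r w y := P w x y hwx.symm hwy.symm hxy
      have hc13 : r w x ≠ r w u := P w x u hwx.symm hwu.symm hxu
      have hc14 : r w x ≠ r w v := P w x v hwx.symm hwv.symm hxv
      have hc23 : r w y ≠ r w u := P w y u hwy.symm hwu.symm hyu
      have hc24 : r w y ≠ r w v := P w y v hwy.symm hwv.symm hyv
      have hc34 : r w u ≠ r w v := P w u v hwu.symm hwv.symm huv
      have hac1 : r x y ≠ r w x := by
        rw [hsym w x]; exact P x y w hxy.symm hwx hwy.symm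
      have hac2 : r x y ≠ r w y := by
        rw [hsym x y, hsym w y]; exact P y x w hxy hwy hwx.symm
      have hac3 : r x y ≠ r w u := by
        rw [hcol, hsym w u]; exact P u v w huv.symm hwu hwv.symm
      have hac4 : r x y ≠ r w v := by
        rw [hcol, hsym u v, hsym w v]; exact P v u w huv hwv hwu.symm
      have hbc1 : r x u ≠ r w x := by
        rw [hsym w x]; exact P x u w hxu.symm hwx hwu.symm
      have hbc2 : r x u ≠ r w y := by
        rw [hb14, hsym w y]; exact P y v w hyv.symm hwy hwv.symm
      have hbc3 : r x u ≠ r w u := by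
        rw [hsym x u, hsym w u]; exact P u x w hxu hwu hwx.symm
      have hbc4 : r x u ≠ r w v := by
        rw [hb14, hsym y v, hsym w v]; exact P v y w hyv hwv hwy.symm
      -- variants for the term r u v
      have hac1' : r u v ≠ r w x := by rw [← hcol]; exact hac1
      have hac2' : r u v ≠ r w y := by rw [← hcol]; exact hac2
      have hac3' : r u v ≠ r w u := by rw [← hcol]; exact hac3
      have hac4' : r u v ≠ r w v := by rw [← hcol]; exact hac4
      have hab1' : r u v ≠ r x u := by rw [← hcol]; exact hab1
      have hab4' : r u v ≠ r y v := by rw [← hcol]; exact hab4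
      have hbc4' : r y v ≠ r w v := by rw [← hb14]; exact hbc4
      have hbc3' : r y v ≠ r w u := by rw [← hb14]; exact hbc3
      refine finisher2 r hsym (hmem w x hwx) (hmem w v hwv) (hmem w y hwy) (hmem w u hwu)
        hc14 hc13 hc24 hc23 hc34.symm
        (hA3m w x y hwx hxy hwy) (hA3m w u v hwu huv hwv)
        (hA3m w x u hwx hxu hwu) (hA3m w y v hwy hyv hwv)
        ?_ ?_ ?_ ?_ ?_ ?_ ?_
      · -- t1 ≠ t2
        refine ms_ne (a := r w x) (by simp [mem_triple_iff]) ?_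
        rw [mem_triple_iff]
        push_neg
        exact ⟨hc13, hac1'.symm, hc14⟩
      · -- t1 ≠ t4
        refine ms_ne (a := r x y) (by simp [mem_triple_iff]) ?_
        rw [mem_triple_iff]; push_neg
        exact ⟨hac2, hab4, hac4⟩
      · -- t3 ≠ t2
        refine (ms_ne (a := r u v) (by simp [mem_triple_iff]) ?_).symm
        rw [mem_triple_iff]; push_neg
        exact ⟨hac1', hab1', hac3'⟩
      · -- t3 ≠ t4
        refine ms_ne (a := r w x) (by simp [mem_triple_iff]) ?_
        rw [mem_triple_iff]; push_neg
        refine ⟨hc12, ?_, hc14⟩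
        rw [← hb14]; exact hbc1.symm
      · -- t2 ≠ t4
        refine ms_ne (a := r u v) (by simp [mem_triple_iff]) ?_
        rw [mem_triple_iff]; push_neg
        exact ⟨hac2', hab4', hac4'⟩
      · -- map t1 = map t2
        simp [hc14, hc13, hac4, hac3, hc24, hc23, hc34, hac4', hac3']
        rw [← hcol]
        exact ms321 _ _ _
      · -- map t3 = map t4
        simp [hbc4, hbc3, hbc4', hbc3', hc14, hc13, hc24, hc23, hc34]
        rw [hb14]
        exact ms321 _ _ _
    · -- case B: merge r x v and r y u
      have hab2' : r u v ≠ r x v := by rw [← hcol]; exact hab2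
      have hab3' : r u v ≠ r y u := by rw [← hcol]; exact hab3
      refine finisher1 r hsym (hmem x v hxv) (hmem y u hyu) hb23
        (hA3m x y v hxy hyv hxv) (hA3m y u v hyu huv hyv) ?_ ?_
      · refine ms_ne (a := r x v) (by simp [mem_triple_iff]) ?_
        rw [mem_triple_iff]; push_neg
        exact ⟨hb23, hab2'.symm, hb24⟩
      · simp [hab3, (show r y v ≠ r y u from hb34.symm), hb23, hab3']
        rw [← hcol]
        exact ms312 _ _ _
  · -- case A: merge r x u and r y v
    have hab4' : r u v ≠ r y v := by rw [← hcol]; exact hab4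
    refine finisher1 r hsym (hmem x u hxu) (hmem y v hyv) hb14
      (hA3m x y u hxy hyu hxu) (hA3m y u v hyu huv hyv) ?_ ?_
    · refine ms_ne (a := r x u) (by simp [mem_triple_iff]) ?_
      rw [mem_triple_iff]; push_neg
      exact ⟨hb13, (by rw [← hcol]; exact hab1.symm), hb14⟩
    · simp [hab4, (show r y u ≠ r y v from hb34), hb14, hab4']
      rw [← hcol]
      exact ms213 _ _ _
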